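/- Let (F^α) be the vector potential of a flat F-manifold with unit A, with F^α ∈ ℂ[[t^1,…,t^N]]. Then there exists a unique family of formal power series Ω^{α,d}_β ∈ ℂ[[t^1,…,t^N]] (1 ≤ α,β ≤ N, d ≥ 0) such that: Ω^{α,0}_β = ∂F^α/∂t^β − (∂F^α/∂t^β)(0); the constant term of Ω^{α,d}_β vanishes for every d ≥ 0; and ∂Ω^{α,d}_β/∂t^γ = Σ_μ c^μ_{γβ} Ω^{α,d−1}_μ for every d ≥ 1 and all α,β,γ. (This is the ancestor calibration.) -/

import Mathlib

/-!
Ancestor calibration of a flat F-manifold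
(Arsie–Buryak–Lorenzoni–Rossi, "Semisimple flat F-manifolds in higher genus").
-/

noncomputable section
open MvPowerSeries

variable {N : ℕ}

/-- The partial derivative `∂/∂t^β` of a formal power series in `t^1,…,t^N`. -/
def pdN (β : Fin N) (F : MvPowerSeries (Fin N) ℂ) : MvPowerSeries (Fin N) ℂ :=
  (fun d => ((d β + 1 : ℕ) : ℂ) * MvPowerSeries.coeff (d + Finsupp.single β 1) F :
    (Fin N →₀ ℕ) → ℂ)

lemma coeff_pdN (β : Fin N) (n : Fin N →₀ ℕ) (f : MvPowerSeries (Fin N) ℂ) :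
    MvPowerSeries.coeff n (pdN β f)
      = ((n β + 1 : ℕ) : ℂ) * MvPowerSeries.coeff (n + Finsupp.single β 1) f := rfl

lemma pdN_ext {f g : MvPowerSeries (Fin N) ℂ}
    (h0 : MvPowerSeries.constantCoeff f = MvPowerSeries.constantCoeff g)
    (h : ∀ β, pdN β f = pdN β g) : f = g := by
  ext m
  rcases eq_or_ne m 0 with rfl | hm
  · simpa [MvPowerSeries.coeff_zero_eq_constantCoeff] using h0
  · obtain ⟨β, hβ⟩ := Finsupp.ne_iff.mp hm
    simp only [Finsupp.coe_zero, Pi.zero_apply] at hβ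
    have h1 : Finsupp.single β 1 ≤ m := Finsupp.single_le_iff.mpr (Nat.one_le_iff_ne_zero.mpr hβ)
    have hmeq : (m - Finsupp.single β 1) + Finsupp.single β 1 = m := tsub_add_cancel_of_le h1
    have h2 := congrArg (MvPowerSeries.coeff (m - Finsupp.single β 1)) (h β)
    rw [coeff_pdN, coeff_pdN, hmeq] at h2
    exact mul_left_cancel₀ (Nat.cast_ne_zero.mpr (Nat.succ_ne_zero _)) h2

lemma pdN_add (β : Fin N) (f g : MvPowerSeries (Fin N) ℂ) :
    pdN β (f + g) = pdN β f + pdN β g := by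
  ext n; simp [coeff_pdN, mul_add]

lemma pdN_zero (β : Fin N) : pdN β (0 : MvPowerSeries (Fin N) ℂ) = 0 := by
  ext n; simp [coeff_pdN]

lemma pdN_sub (β : Fin N) (f g : MvPowerSeries (Fin N) ℂ) :
    pdN β (f - g) = pdN β f - pdN β g := by
  ext n; simp [coeff_pdN, mul_sub]

lemma pdN_C (β : Fin N) (c : ℂ) : pdN β (MvPowerSeries.C c) = 0 := by
  ext n
  have hne : n + Finsupp.single β 1 ≠ 0 := by
    intro h
    have := DFunLike.congr_fun h β
    simp [Finsupp.add_apply, Finsupp.single_eq_same] at this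
  simp [coeff_pdN, MvPowerSeries.coeff_C, hne]

lemma pdN_sum {ι : Type*} (s : Finset ι) (β : Fin N) (f : ι → MvPowerSeries (Fin N) ℂ) :
    pdN β (∑ i ∈ s, f i) = ∑ i ∈ s, pdN β (f i) := by
  classical
  induction s using Finset.induction with
  | empty => simpa using pdN_zero β
  | @insert a s h ih => rw [Finset.sum_insert h, Finset.sum_insert h, pdN_add, ih]

lemma pdN_comm (β γ : Fin N) (f : MvPowerSeries (Fin N) ℂ) :
    pdN β (pdN γ f) = pdN γ (pdN β f) := by
  ext n
  simp only [coeff_pdN, Finsupp.add_apply]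
  have e : (n + Finsupp.single β 1) + Finsupp.single γ 1
      = (n + Finsupp.single γ 1) + Finsupp.single β 1 := add_right_comm _ _ _
  rw [e]
  rcases eq_or_ne β γ with rfl | h
  · ring
  · rw [Finsupp.single_eq_of_ne h, Finsupp.single_eq_of_ne h.symm]
    push_cast
    ring

lemma sum_shift (β : Fin N) (n : Fin N →₀ ℕ) (φ ψ : (Fin N →₀ ℕ) → ℂ) :
    ∑ p ∈ Finset.HasAntidiagonal.antidiagonal (n + Finsupp.single β 1), (((p.1 : Fin N →₀ ℕ) β : ℕ) : ℂ) * (φ p.1 * ψ p.2)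
      = ∑ p ∈ Finset.HasAntidiagonal.antidiagonal n,
          (((p.1 : Fin N →₀ ℕ) β + 1 : ℕ) : ℂ) * (φ (p.1 + Finsupp.single β 1) * ψ p.2) := by
  classical
  rw [← Finset.sum_filter_of_ne
    (p := fun p : (Fin N →₀ ℕ) × (Fin N →₀ ℕ) => p.1 β ≠ 0)
    (fun x _ hfx h0 => hfx (by simp [h0]))]
  refine Finset.sum_nbij' (fun p => (p.1 - Finsupp.single β 1, p.2))
    (fun p => (p.1 + Finsupp.single β 1, p.2)) ?_ ?_ ?_ ?_ ?_
  · rintro ⟨p, q⟩ hp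
    simp only [Finset.mem_filter, Finset.HasAntidiagonal.mem_antidiagonal] at hp
    obtain ⟨hpq, hpβ⟩ := hp
    have hle : Finsupp.single β 1 ≤ p := Finsupp.single_le_iff.mpr (Nat.one_le_iff_ne_zero.mpr hpβ)
    simp only [Finset.HasAntidiagonal.mem_antidiagonal]
    rw [tsub_add_eq_add_tsub hle, hpq, add_tsub_cancel_right]
  · rintro ⟨p, q⟩ hp
    simp only [Finset.HasAntidiagonal.mem_antidiagonal] at hp
    simp only [Finset.mem_filter, Finset.HasAntidiagonal.mem_antidiagonal]
    constructor
    · rw [add_right_comm, hp]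
    · simp [Finsupp.add_apply, Finsupp.single_eq_same]
  · rintro ⟨p, q⟩ hp
    simp only [Finset.mem_filter, Finset.HasAntidiagonal.mem_antidiagonal] at hp
    have hle : Finsupp.single β 1 ≤ p :=
      Finsupp.single_le_iff.mpr (Nat.one_le_iff_ne_zero.mpr hp.2)
    simp [tsub_add_cancel_of_le hle]
  · rintro ⟨p, q⟩ _
    simp [add_tsub_cancel_right]
  · rintro ⟨p, q⟩ hp
    simp only [Finset.mem_filter, Finset.HasAntidiagonal.mem_antidiagonal] at hp
    obtain ⟨hpq, hpβ⟩ := hp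
    have hle : Finsupp.single β 1 ≤ p := Finsupp.single_le_iff.mpr (Nat.one_le_iff_ne_zero.mpr hpβ)
    have h1 : (p - Finsupp.single β 1 : Fin N →₀ ℕ) β + 1 = p β := by
      rw [Finsupp.tsub_apply, Finsupp.single_eq_same]
      omega
    have h2 : (p - Finsupp.single β 1) + Finsupp.single β 1 = p := tsub_add_cancel_of_le hle
    simp only [h1, h2]

lemma sum_swap_anti (m : Fin N →₀ ℕ) (h : (Fin N →₀ ℕ) × (Fin N →₀ ℕ) → ℂ) :
    ∑ p ∈ Finset.HasAntidiagonal.antidiagonal m, h p = ∑ p ∈ Finset.HasAntidiagonal.antidiagonal m, h p.swap :=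
  Finset.sum_nbij' Prod.swap Prod.swap
    (fun _ ha => Finset.HasAntidiagonal.swap_mem_antidiagonal.mpr ha)
    (fun _ ha => Finset.HasAntidiagonal.swap_mem_antidiagonal.mpr ha)
    (fun a _ => Prod.swap_swap a) (fun a _ => Prod.swap_swap a)
    (fun a _ => by rw [Prod.swap_swap])

lemma sum_shift' (β : Fin N) (n : Fin N →₀ ℕ) (φ ψ : (Fin N →₀ ℕ) → ℂ) :
    ∑ p ∈ Finset.HasAntidiagonal.antidiagonal (n + Finsupp.single β 1), (((p.2 : Fin N →₀ ℕ) β : ℕ) : ℂ) * (φ p.1 * ψ p.2)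
      = ∑ p ∈ Finset.HasAntidiagonal.antidiagonal n,
          (((p.2 : Fin N →₀ ℕ) β + 1 : ℕ) : ℂ) * (φ p.1 * ψ (p.2 + Finsupp.single β 1)) := by
  calc ∑ p ∈ Finset.HasAntidiagonal.antidiagonal (n + Finsupp.single β 1), (((p.2 : Fin N →₀ ℕ) β : ℕ) : ℂ) * (φ p.1 * ψ p.2)
      = ∑ p ∈ Finset.HasAntidiagonal.antidiagonal (n + Finsupp.single β 1), (((p.1 : Fin N →₀ ℕ) β : ℕ) : ℂ) * (ψ p.1 * φ p.2) := by
        rw [sum_swap_anti]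
        exact Finset.sum_congr rfl fun p _ => by simp only [Prod.fst_swap, Prod.snd_swap]; ring
    _ = ∑ p ∈ Finset.HasAntidiagonal.antidiagonal n,
          (((p.1 : Fin N →₀ ℕ) β + 1 : ℕ) : ℂ) * (ψ (p.1 + Finsupp.single β 1) * φ p.2) := sum_shift β n ψ φ
    _ = ∑ p ∈ Finset.HasAntidiagonal.antidiagonal n,
          (((p.2 : Fin N →₀ ℕ) β + 1 : ℕ) : ℂ) * (φ p.1 * ψ (p.2 + Finsupp.single β 1)) := by
        rw [sum_swap_anti]
        exact Finset.sum_congr rfl fun p _ => by simp only [Prod.fst_swap, Prod.snd_swap]; ring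

lemma pdN_mul (β : Fin N) (f g : MvPowerSeries (Fin N) ℂ) :
    pdN β (f * g) = pdN β f * g + f * pdN β g := by
  classical
  ext n
  rw [map_add, coeff_pdN, MvPowerSeries.coeff_mul, MvPowerSeries.coeff_mul,
    MvPowerSeries.coeff_mul, Finset.mul_sum]
  have key : ∀ p ∈ Finset.HasAntidiagonal.antidiagonal (n + Finsupp.single β 1),
      ((n β + 1 : ℕ) : ℂ) * (MvPowerSeries.coeff p.1 f * MvPowerSeries.coeff p.2 g)
        = (((p.1 : Fin N →₀ ℕ) β : ℕ) : ℂ) * (MvPowerSeries.coeff p.1 f * MvPowerSeries.coeff p.2 g)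
          + (((p.2 : Fin N →₀ ℕ) β : ℕ) : ℂ) * (MvPowerSeries.coeff p.1 f * MvPowerSeries.coeff p.2 g) := by
    intro p hp
    rw [Finset.HasAntidiagonal.mem_antidiagonal] at hp
    have hpβ : p.1 β + p.2 β = n β + 1 := by
      have := DFunLike.congr_fun hp β
      simpa [Finsupp.add_apply, Finsupp.single_eq_same] using this
    rw [← add_mul, ← Nat.cast_add, hpβ]
  rw [Finset.sum_congr rfl key, Finset.sum_add_distrib]
  congr 1
  · exact (sum_shift β n (fun m => MvPowerSeries.coeff m f)
        (fun m => MvPowerSeries.coeff m g)).trans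
      (Finset.sum_congr rfl fun p _ => by rw [coeff_pdN]; ring)
  · exact (sum_shift' β n (fun m => MvPowerSeries.coeff m f)
        (fun m => MvPowerSeries.coeff m g)).trans
      (Finset.sum_congr rfl fun p _ => by rw [coeff_pdN]; ring)

/-- A nonzero exponent has a coordinate where it is nonzero. -/
lemma exists_ne_zero {m : Fin N →₀ ℕ} (h : m ≠ 0) : ∃ β, m β ≠ 0 := by
  obtain ⟨β, hβ⟩ := Finsupp.ne_iff.mp h
  exact ⟨β, by simpa using hβ⟩

/-- Formal antiderivative: integrates the family `G` (candidate partials) into a series with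
zero constant term. -/
def integ (G : Fin N → MvPowerSeries (Fin N) ℂ) : MvPowerSeries (Fin N) ℂ :=
  (fun m =>
    if h : m = 0 then 0
    else
      MvPowerSeries.coeff (m - Finsupp.single (exists_ne_zero h).choose 1)
          (G (exists_ne_zero h).choose) / ((m (exists_ne_zero h).choose : ℕ) : ℂ) :
    (Fin N →₀ ℕ) → ℂ)

lemma coeff_integ (G : Fin N → MvPowerSeries (Fin N) ℂ) (m : Fin N →₀ ℕ) (h : m ≠ 0) :
    MvPowerSeries.coeff m (integ G)
      = MvPowerSeries.coeff (m - Finsupp.single (exists_ne_zero h).choose 1)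
          (G (exists_ne_zero h).choose) / ((m (exists_ne_zero h).choose : ℕ) : ℂ) := by
  show (if h' : m = 0 then (0 : ℂ) else _) = _
  rw [dif_neg h]

lemma constantCoeff_integ (G : Fin N → MvPowerSeries (Fin N) ℂ) :
    MvPowerSeries.constantCoeff (integ G) = 0 := by
  rw [← MvPowerSeries.coeff_zero_eq_constantCoeff]
  show (integ G) 0 = 0
  rw [integ]
  exact dif_pos rfl

lemma integ_wd (G : Fin N → MvPowerSeries (Fin N) ℂ)
    (hsym : ∀ β γ, pdN γ (G β) = pdN β (G γ))
    (m : Fin N →₀ ℕ) (β γ : Fin N) (hβ : m β ≠ 0) (hγ : m γ ≠ 0) :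
    ((m γ : ℕ) : ℂ) * MvPowerSeries.coeff (m - Finsupp.single β 1) (G β)
      = ((m β : ℕ) : ℂ) * MvPowerSeries.coeff (m - Finsupp.single γ 1) (G γ) := by
  rcases eq_or_ne β γ with rfl | hne
  · rfl
  · set n := m - Finsupp.single β 1 - Finsupp.single γ 1 with hn
    have e1 : n + Finsupp.single γ 1 = m - Finsupp.single β 1 := by
      ext x
      simp only [hn, Finsupp.add_apply, Finsupp.tsub_apply, Finsupp.single_apply]
      have h1 : 1 ≤ m β := Nat.one_le_iff_ne_zero.mpr hβ
      have h2 : 1 ≤ m γ := Nat.one_le_iff_ne_zero.mpr hγ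
      split_ifs with hb hg hg <;> subst_vars <;>
        first
        | exact absurd rfl hne
        | omega
    have e2 : n + Finsupp.single β 1 = m - Finsupp.single γ 1 := by
      ext x
      simp only [hn, Finsupp.add_apply, Finsupp.tsub_apply, Finsupp.single_apply]
      have h1 : 1 ≤ m β := Nat.one_le_iff_ne_zero.mpr hβ
      have h2 : 1 ≤ m γ := Nat.one_le_iff_ne_zero.mpr hγ
      split_ifs with hb hg hg <;> subst_vars <;>
        first
        | exact absurd rfl hne
        | omega
    have e3 : n γ + 1 = m γ := by
      simp only [hn, Finsupp.tsub_apply, Finsupp.single_eq_same,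
        Finsupp.single_apply]
      rw [if_neg hne]
      have h2 : 1 ≤ m γ := Nat.one_le_iff_ne_zero.mpr hγ
      omega
    have e4 : n β + 1 = m β := by
      simp only [hn, Finsupp.tsub_apply, Finsupp.single_eq_same,
        Finsupp.single_apply]
      rw [if_neg (fun h => hne h.symm)]
      have h1 : 1 ≤ m β := Nat.one_le_iff_ne_zero.mpr hβ
      omega
    have h := congrArg (MvPowerSeries.coeff n) (hsym β γ)
    rw [coeff_pdN, coeff_pdN, e1, e2, e3, e4] at h
    exact h

lemma pdN_integ (G : Fin N → MvPowerSeries (Fin N) ℂ)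
    (hsym : ∀ β γ, pdN γ (G β) = pdN β (G γ)) (β : Fin N) :
    pdN β (integ G) = G β := by
  ext n
  rw [coeff_pdN]
  set m := n + Finsupp.single β 1 with hm
  have hmβ : m β ≠ 0 := by simp [hm, Finsupp.add_apply, Finsupp.single_eq_same]
  have hm0 : m ≠ 0 := by
    intro h
    exact hmβ (by rw [h]; rfl)
  rw [coeff_integ G m hm0]
  set c := (exists_ne_zero hm0).choose with hc
  have hmc : m c ≠ 0 := (exists_ne_zero hm0).choose_spec
  have wd := integ_wd G hsym m β c hmβ hmc
  have hsub : m - Finsupp.single β 1 = n := by rw [hm, add_tsub_cancel_right]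
  rw [hsub] at wd
  have hnb : (m β : ℕ) = n β + 1 := by
    simp [hm, Finsupp.add_apply, Finsupp.single_eq_same]
  have hcc : ((m c : ℕ) : ℂ) ≠ 0 := Nat.cast_ne_zero.mpr hmc
  rw [← mul_div_assoc, div_eq_iff hcc, ← hnb]
  linear_combination -wd


/-- The candidate calibration, defined by recursive integration. -/
def OmegaAux (F : Fin N → MvPowerSeries (Fin N) ℂ) :
    ℕ → Fin N → Fin N → MvPowerSeries (Fin N) ℂ
  | 0 => fun α β => pdN β (F α)
      - MvPowerSeries.C (MvPowerSeries.constantCoeff (pdN β (F α)))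
  | d + 1 => fun α β => integ (fun γ => ∑ μ, pdN γ (pdN β (F μ)) * OmegaAux F d α μ)

/-- Auxiliary weights: `W 0` is the Kronecker delta, `W (d+1) = Ω d`. -/
def WAux (F : Fin N → MvPowerSeries (Fin N) ℂ) :
    ℕ → Fin N → Fin N → MvPowerSeries (Fin N) ℂ
  | 0 => fun α ν => if ν = α then 1 else 0
  | d + 1 => fun α ν => OmegaAux F d α ν

lemma hassoc_sym (F : Fin N → MvPowerSeries (Fin N) ℂ)
    (hassoc : ∀ α β γ δ : Fin N,
        ∑ μ, pdN β (pdN μ (F α)) * pdN γ (pdN δ (F μ))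
          = ∑ μ, pdN γ (pdN μ (F α)) * pdN β (pdN δ (F μ)))
    (W : Fin N → MvPowerSeries (Fin N) ℂ) (β γ δ : Fin N) :
    ∑ μ, pdN γ (pdN β (F μ)) * (∑ ν, pdN δ (pdN μ (F ν)) * W ν)
      = ∑ μ, pdN δ (pdN β (F μ)) * (∑ ν, pdN γ (pdN μ (F ν)) * W ν) := by
  calc ∑ μ, pdN γ (pdN β (F μ)) * (∑ ν, pdN δ (pdN μ (F ν)) * W ν)
      = ∑ ν, (∑ μ, pdN δ (pdN μ (F ν)) * pdN γ (pdN β (F μ))) * W ν := by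
        simp_rw [Finset.mul_sum, Finset.sum_mul]
        rw [Finset.sum_comm]
        exact Finset.sum_congr rfl fun ν _ => Finset.sum_congr rfl fun μ _ => by ring
    _ = ∑ ν, (∑ μ, pdN γ (pdN μ (F ν)) * pdN δ (pdN β (F μ))) * W ν :=
        Finset.sum_congr rfl fun ν _ => by rw [hassoc ν δ γ β]
    _ = ∑ μ, pdN δ (pdN β (F μ)) * (∑ ν, pdN γ (pdN μ (F ν)) * W ν) := by
        simp_rw [Finset.mul_sum, Finset.sum_mul]
        rw [Finset.sum_comm]
        exact Finset.sum_congr rfl fun ν _ => Finset.sum_congr rfl fun μ _ => by ring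

lemma G_sym (F : Fin N → MvPowerSeries (Fin N) ℂ)
    (hassoc : ∀ α β γ δ : Fin N,
        ∑ μ, pdN β (pdN μ (F α)) * pdN γ (pdN δ (F μ))
          = ∑ μ, pdN γ (pdN μ (F α)) * pdN β (pdN δ (F μ)))
    (W Ωd : Fin N → MvPowerSeries (Fin N) ℂ) (β : Fin N)
    (hW : ∀ μ δ, pdN δ (Ωd μ) = ∑ ν, pdN δ (pdN μ (F ν)) * W ν) (γ δ : Fin N) :
    pdN δ (∑ μ, pdN γ (pdN β (F μ)) * Ωd μ)
      = pdN γ (∑ μ, pdN δ (pdN β (F μ)) * Ωd μ) := by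
  rw [pdN_sum, pdN_sum]
  simp_rw [pdN_mul, hW]
  rw [Finset.sum_add_distrib, Finset.sum_add_distrib]
  congr 1
  · exact Finset.sum_congr rfl fun μ _ => by rw [pdN_comm]
  · exact hassoc_sym F hassoc W β γ δ

lemma OmegaAux_pd (F : Fin N → MvPowerSeries (Fin N) ℂ)
    (hassoc : ∀ α β γ δ : Fin N,
        ∑ μ, pdN β (pdN μ (F α)) * pdN γ (pdN δ (F μ))
          = ∑ μ, pdN γ (pdN μ (F α)) * pdN β (pdN δ (F μ))) :
    ∀ (d : ℕ) (α μ δ : Fin N),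
      pdN δ (OmegaAux F d α μ) = ∑ ν, pdN δ (pdN μ (F ν)) * WAux F d α ν := by
  intro d
  induction d with
  | zero =>
    intro α μ δ
    rw [OmegaAux, WAux, pdN_sub, pdN_C, sub_zero]
    simp
  | succ d ih =>
    intro α μ δ
    rw [OmegaAux, WAux]
    exact pdN_integ _ (fun β' γ' => G_sym F hassoc (WAux F d α) (OmegaAux F d α) μ (ih α) β' γ') δ

/-- For the vector potential `(F^α)` of a flat F-manifold with unit `A`
there exists a unique ancestor calibration: a family `Ω^{α,d}_β` of formal power series with
`Ω^{α,0}_β = ∂F^α/∂t^β − (∂F^α/∂t^β)(0)`, vanishing constant terms, and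
`∂Ω^{α,d}_β/∂t^γ = Σ_μ c^μ_{γβ} Ω^{α,d−1}_μ` for all `d ≥ 1`. -/
theorem statement15 {N : ℕ} (A : Fin N → ℂ) (F : Fin N → MvPowerSeries (Fin N) ℂ)
    -- unit axiom: A^μ ∂²F^α/∂t^μ∂t^β = δ^α_β
    (hunit : ∀ α β : Fin N,
        ∑ μ, MvPowerSeries.C (A μ) * pdN μ (pdN β (F α))
          = if α = β then 1 else 0)
    -- associativity axiom
    (hassoc : ∀ α β γ δ : Fin N,
        ∑ μ, pdN β (pdN μ (F α)) * pdN γ (pdN δ (F μ))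
          = ∑ μ, pdN γ (pdN μ (F α)) * pdN β (pdN δ (F μ))) :
    ∃! Ω : ℕ → Fin N → Fin N → MvPowerSeries (Fin N) ℂ,
      (∀ α β : Fin N,
          Ω 0 α β = pdN β (F α)
            - MvPowerSeries.C (MvPowerSeries.constantCoeff (pdN β (F α)))) ∧
      (∀ (d : ℕ) (α β : Fin N), MvPowerSeries.constantCoeff (Ω d α β) = 0) ∧
      (∀ (d : ℕ) (α β γ : Fin N),
          pdN γ (Ω (d + 1) α β) = ∑ μ, pdN γ (pdN β (F μ)) * Ω d α μ) := by
  have hderiv : ∀ (d : ℕ) (α β γ : Fin N),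
      pdN γ (OmegaAux F (d + 1) α β) = ∑ μ, pdN γ (pdN β (F μ)) * OmegaAux F d α μ := by
    intro d α β γ
    rw [OmegaAux]
    exact pdN_integ _
      (fun β' γ' => G_sym F hassoc (WAux F d α) (OmegaAux F d α) β
        (OmegaAux_pd F hassoc d α) β' γ') γ
  refine ⟨OmegaAux F, ⟨fun α β => by rw [OmegaAux], ?_, hderiv⟩, ?_⟩
  · intro d α β
    cases d with
    | zero =>
      rw [OmegaAux]
      simp
    | succ d =>
      rw [OmegaAux]
      exact constantCoeff_integ _
  · intro Ω' ⟨h0, hc, hd⟩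
    have key : ∀ d, Ω' d = OmegaAux F d := by
      intro d
      induction d with
      | zero =>
        funext α β
        rw [h0 α β, OmegaAux]
      | succ d ih =>
        funext α β
        refine pdN_ext ?_ ?_
        · rw [hc (d + 1) α β]
          rw [OmegaAux]
          exact (constantCoeff_integ _).symm
        · intro γ
          rw [hd d α β γ, hderiv d α β γ, ih]
    funext d
    exact key d


end
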